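/- arXiv:1608.06013 — 2 statements merged into one kernel-verified Lean document; each statement's English description precedes it below -/
import Mathlib

section
/- Let M be an internally 4-connected binary matroid in which every element is in exactly three triangles. Then M has no cocircuit of odd size. -/
open Set Matroid

namespace Paper

variable {α : Type*}

/-- A circuit of a matroid: a minimal dependent set. -/
def Circuit (M : Matroid α) (C : Set α) : Prop :=
  C ⊆ M.E ∧ ¬ M.Indep C ∧ ∀ D, D ⊂ C → M.Indep D

/-- A cocircuit: a circuit of the dual matroid. -/
def Cocircuit (M : Matroid α) (C : Set α) : Prop := Circuit M✶ C

/-- A triangle: a 3-element circuit. -/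
def IsTriangle (M : Matroid α) (T : Set α) : Prop := Circuit M T ∧ T.encard = 3

/-- A triad: a 3-element cocircuit. -/
def IsTriad (M : Matroid α) (T : Set α) : Prop := Cocircuit M T ∧ T.encard = 3

/-- The (extended) rank of a set: the supremum of the cardinalities of
independent subsets. -/
noncomputable def eRank (M : Matroid α) (X : Set α) : ℕ∞ :=
  ⨆ I ∈ {I : Set α | M.Indep I ∧ I ⊆ X}, I.encard

/-- The rank of the matroid. -/
noncomputable def eRk (M : Matroid α) : ℕ∞ := eRank M M.E

/-- `(X, Y)` is a `k`-separation of `M`: a partition of the ground set into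
two sets, each of size at least `k`, with `λ(X) = r(X) + r(Y) - r(M) ≤ k - 1`. -/
def IsKSeparation (M : Matroid α) (k : ℕ) (X Y : Set α) : Prop :=
  Disjoint X Y ∧ X ∪ Y = M.E ∧
    eRank M X + eRank M Y ≤ eRk M + ((k - 1 : ℕ) : ℕ∞) ∧
    (k : ℕ∞) ≤ X.encard ∧ (k : ℕ∞) ≤ Y.encard

/-- `M` is `n`-connected if it has no `k`-separation for any positive `k < n`. -/
def NConnected (M : Matroid α) (n : ℕ) : Prop :=
  ∀ k, 1 ≤ k → k < n → ∀ X Y, ¬ IsKSeparation M k X Y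

/-- `M` is internally 4-connected if it is 3-connected and every
3-separation has a side that is a triangle or a triad. -/
def InternallyFourConnected (M : Matroid α) : Prop :=
  NConnected M 3 ∧ ∀ X Y, IsKSeparation M 3 X Y →
    IsTriangle M X ∨ IsTriad M X ∨ IsTriangle M Y ∨ IsTriad M Y

/-- `M` is binary: representable over `GF(2)`. -/
def Binary (M : Matroid α) : Prop :=
  ∃ φ : α → (α →₀ ZMod 2), ∀ I, I ⊆ M.E →
    (M.Indep I ↔ LinearIndependent (ZMod 2) (fun x : I => φ x.1))

/-- Every element of `M` is in exactly three triangles. -/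
def EveryElementInThreeTriangles (M : Matroid α) : Prop :=
  ∀ e ∈ M.E, {T : Set α | IsTriangle M T ∧ e ∈ T}.encard = 3

/-- Deletion of a set of elements. -/
def delete (M : Matroid α) (D : Set α) : Matroid α := M ↾ (M.E \ D)

/-- Contraction of a set of elements. -/
def contract (M : Matroid α) (C : Set α) : Matroid α := (delete M✶ C)✶

/-- A nonloop. -/
def Nonloop (M : Matroid α) (e : α) : Prop := M.Indep {e}

/-- `N` is a simplification of `M`: the restriction of `M` to a set of
nonloops containing exactly one element from each parallel class. -/
def IsSimplificationOf (N M : Matroid α) : Prop :=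
  ∃ S, S ⊆ M.E ∧ N = M ↾ S ∧ (∀ e ∈ S, Nonloop M e) ∧
    ∀ f, Nonloop M f → ∃! e, e ∈ S ∧ M.closure {e} = M.closure {f}

/-- `si(M/e)` is internally 4-connected. -/
def SiContractI4C (M : Matroid α) (e : α) : Prop :=
  ∀ N, IsSimplificationOf N (contract M {e}) → InternallyFourConnected N

/-- A set is fully closed if it is closed in `M` and in `M✶`. -/
def FullyClosed (M : Matroid α) (F : Set α) : Prop :=
  M.closure F = F ∧ M✶.closure F = F

/-- The full closure of a set: the intersection of all fully closed sets
containing it. -/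
def fcl (M : Matroid α) (Z : Set α) : Set α := ⋂₀ {F | Z ⊆ F ∧ FullyClosed M F}

/-- An exact 4-separation: a 4-separation with `λ = 3`. -/
def IsExact4Separation (M : Matroid α) (X Y : Set α) : Prop :=
  Disjoint X Y ∧ X ∪ Y = M.E ∧
    eRank M X + eRank M Y = eRk M + 3 ∧
    (4 : ℕ∞) ≤ X.encard ∧ (4 : ℕ∞) ≤ Y.encard


private def Rep (M : Matroid α) (φ : α → (α →₀ ZMod 2)) : Prop :=
  ∀ I, I ⊆ M.E → (M.Indep I ↔ LinearIndependent (ZMod 2) (fun x : I => φ x.1))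

lemma span_basis_aux {M : Matroid α} {φ : α → (α →₀ ZMod 2)} (hrep : Rep M φ)
    {I : Set α} (hI : M.Indep I) {y : α} (hy : y ∈ M.E) (hycl : y ∈ M.closure I) :
    φ y ∈ Submodule.span (ZMod 2) (φ '' I) := by
  by_cases hyI : y ∈ I
  · exact Submodule.subset_span ⟨y, hyI, rfl⟩
  have hdep : ¬ M.Indep (insert y I) := by
    rw [hI.insert_indep_iff_of_notMem hyI]
    simp [hycl]
  by_contra hspan
  exact hdep ((hrep _ (insert_subset hy hI.subset_ground)).mpr
    ((linearIndepOn_insert (f := φ) hyI).mpr ⟨(hrep I hI.subset_ground).mp hI, hspan⟩))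

lemma mem_closure_iff_mem_span {M : Matroid α} {φ : α → (α →₀ ZMod 2)} (hrep : Rep M φ)
    {X : Set α} (hX : X ⊆ M.E) {e : α} (he : e ∈ M.E) :
    e ∈ M.closure X ↔ φ e ∈ Submodule.span (ZMod 2) (φ '' X) := by
  obtain ⟨I, hI⟩ := M.exists_isBasis X hX
  constructor
  · intro h
    have h' : e ∈ M.closure I := by rw [hI.closure_eq_closure]; exact h
    exact Submodule.span_mono (Set.image_mono hI.subset) (span_basis_aux hrep hI.indep he h')
  · intro h
    have hXI : Submodule.span (ZMod 2) (φ '' X) ≤ Submodule.span (ZMod 2) (φ '' I) := by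
      rw [Submodule.span_le]
      rintro _ ⟨x, hx, rfl⟩
      refine span_basis_aux hrep hI.indep (hX hx) ?_
      rw [hI.closure_eq_closure]
      exact M.mem_closure_of_mem hx hX
    by_contra hecl
    have heI : e ∉ I := fun h' => hecl (M.mem_closure_of_mem (hI.subset h') hX)
    have hind : M.Indep (insert e I) := by
      rw [hI.indep.insert_indep_iff_of_notMem heI]
      exact ⟨he, fun hc => hecl (by rwa [hI.closure_eq_closure] at hc)⟩
    exact ((linearIndepOn_insert (f := φ) heI).mp
      ((hrep _ (insert_subset he hI.indep.subset_ground)).mp hind)).2 (hXI h)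

lemma circuit_sum_zero {M : Matroid α} {φ : α → (α →₀ ZMod 2)} (hrep : Rep M φ)
    {T : Set α} (hTE : T ⊆ M.E) (hdep : ¬ M.Indep T) (hmin : ∀ D, D ⊂ T → M.Indep D)
    (hfin : T.Finite) :
    ∑ x ∈ hfin.toFinset, φ x = 0 := by
  classical
  haveI := hfin.fintype
  have hnli : ¬ LinearIndependent (ZMod 2) (fun x : T => φ x.1) :=
    fun h => hdep ((hrep T hTE).mpr h)
  obtain ⟨g, hg0, i₀, hi₀⟩ := Fintype.not_linearIndependent_iff.mp hnli
  set gg : α → ZMod 2 := fun a => if h : a ∈ T then g ⟨a, h⟩ else 0 with hgg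
  have hggT : ∀ i : T, gg i.1 = g i := fun i => dif_pos i.2
  have hsum : ∑ a ∈ hfin.toFinset, gg a • φ a = 0 := by
    rw [Finset.sum_subtype hfin.toFinset (fun x => hfin.mem_toFinset) (fun a => gg a • φ a)]
    rw [← hg0]
    exact Fintype.sum_congr _ _ (fun i => by rw [hggT])
  have hall : ∀ i : T, g i ≠ 0 := by
    intro j hj
    have hDss : T \ {j.1} ⊂ T := Set.sdiff_singleton_ssubset.mpr j.2
    have hD : M.Indep (T \ {j.1}) := hmin _ hDss
    have hDfin : (T \ {j.1}).Finite := hfin.subset diff_subset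
    haveI := hDfin.fintype
    have hli : LinearIndependent (ZMod 2) (fun x : ↥(T \ {j.1}) => φ x.1) :=
      (hrep _ (diff_subset.trans hTE)).mp hD
    have hsumD : ∑ a ∈ hDfin.toFinset, gg a • φ a = 0 := by
      have hefin : hDfin.toFinset = hfin.toFinset.erase j.1 := by
        ext a; simp [and_comm]
      rw [hefin, Finset.sum_erase _ (by
        rw [hggT j, hj, zero_smul])]
      exact hsum
    have hz := Fintype.linearIndependent_iff.mp hli (fun x => gg x.1) (by
      rw [← Finset.sum_subtype hDfin.toFinset (fun x => hDfin.mem_toFinset)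
        (fun a => gg a • φ a)]
      exact hsumD)
    apply hi₀
    by_cases hc : i₀ = j
    · rw [hc]; exact hj
    · have : gg i₀.1 = 0 := hz ⟨i₀.1, ⟨i₀.2, fun h => hc (Subtype.ext h)⟩⟩
      rwa [hggT] at this
  have hone : ∀ i : T, g i = 1 := by
    have h2 : ∀ b : ZMod 2, b ≠ 0 → b = 1 := by decide
    exact fun i => h2 _ (hall i)
  calc ∑ x ∈ hfin.toFinset, φ x = ∑ x ∈ hfin.toFinset, gg x • φ x := by
        refine Finset.sum_congr rfl fun a ha => ?_
        rw [hfin.mem_toFinset] at ha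
        rw [show gg a = 1 from by rw [show a = (⟨a, ha⟩ : T).1 from rfl, hggT, hone], one_smul]
    _ = 0 := hsum


lemma even_inter_cocircuit {M : Matroid α} {φ : α → (α →₀ ZMod 2)} (hrep : Rep M φ)
    {C : Set α} (hC : Cocircuit M C) {T : Set α} (hT : Circuit M T) (hTfin : T.Finite) :
    Even ((T ∩ C).ncard) := by
  classical
  obtain ⟨hCE', hCdep, hCmin⟩ := hC
  have hCE : C ⊆ M.E := hCE'
  obtain ⟨hTE, hTdep, hTmin⟩ := hT
  set H : Set α := M.E \ C with hH
  have hHE : H ⊆ M.E := diff_subset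
  have hnoB : ∀ B, M.IsBase B → ¬ Disjoint C B := by
    intro B hB hdis
    exact hCdep (dual_indep_iff_exists'.mpr ⟨hCE, B, hB, hdis⟩)
  have hF1 : ∀ e ∈ C, e ∉ M.closure H := by
    intro e he hecl
    obtain ⟨-, B, hB, hdis⟩ :=
      dual_indep_iff_exists'.mp (hCmin _ (Set.sdiff_singleton_ssubset.mpr he))
    have hBsub : B ⊆ insert e H := by
      intro b hb
      by_cases hbC : b ∈ C
      · have hbe : b = e := by
          by_contra hne
          exact Set.disjoint_left.mp hdis ⟨hbC, hne⟩ hb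
        simp [hbe]
      · exact Set.mem_insert_of_mem _ ⟨hB.subset_ground hb, hbC⟩
    have hBcl : B ⊆ M.closure H := by
      intro b hb
      rcases hBsub hb with rfl | hbH
      · exact hecl
      · exact M.subset_closure H hHE hbH
    have hEcl : M.E ⊆ M.closure H := by
      rw [← hB.closure_eq]
      exact M.closure_subset_closure_of_subset_closure hBcl
    obtain ⟨I, hI⟩ := M.exists_isBasis H hHE
    have hIbase : M.IsBase I := hI.indep.isBase_of_ground_subset_closure
      (by rwa [hI.closure_eq_closure])
    exact hnoB I hIbase (Set.disjoint_left.mpr fun a haC haI => (hI.subset haI).2 haC)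
  have hF2 : ∀ e ∈ C, ∀ f ∈ C, f ∈ M.closure (insert e H) := by
    intro e he f hf
    have hins : insert e H ⊆ M.E := insert_subset (hCE he) hHE
    by_cases hfe : f = e
    · subst hfe
      exact M.mem_closure_of_mem (Set.mem_insert f H) hins
    obtain ⟨-, B, hB, hdis⟩ :=
      dual_indep_iff_exists'.mp (hCmin _ (Set.sdiff_singleton_ssubset.mpr hf))
    have hfB : f ∈ B := by
      by_contra hfB
      refine hnoB B hB (Set.disjoint_left.mpr fun a haC haB => ?_)
      by_cases hafeq : a = f
      · exact hfB (hafeq ▸ haB)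
      · exact Set.disjoint_left.mp hdis ⟨haC, hafeq⟩ haB
    have hBH : B \ {f} ⊆ H := by
      intro b hb
      exact ⟨hB.subset_ground hb.1, fun hbC => Set.disjoint_left.mp hdis ⟨hbC, hb.2⟩ hb.1⟩
    have hecl : e ∈ M.closure (insert f (B \ {f})) \ M.closure (B \ {f}) := by
      constructor
      · rw [Set.insert_diff_singleton, Set.insert_eq_of_mem hfB, hB.closure_eq]
        exact hCE he
      · exact fun hc => hF1 e he (M.closure_subset_closure hBH hc)
    have hex := Matroid.closure_exchange hecl
    exact M.closure_subset_closure (insert_subset_insert hBH) hex.1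
  set W := Submodule.span (ZMod 2) (φ '' H) with hW
  have hWmem : ∀ e ∈ C, φ e ∉ W :=
    fun e he hmem => hF1 e he ((mem_closure_iff_mem_span hrep hHE (hCE he)).mpr hmem)
  have hq : ∀ e ∈ C, ∀ f ∈ C, W.mkQ (φ f) = W.mkQ (φ e) := by
    intro e he f hf
    have hins : insert e H ⊆ M.E := insert_subset (hCE he) hHE
    have hmem := (mem_closure_iff_mem_span hrep hins (hCE hf)).mp (hF2 e he f hf)
    rw [Set.image_insert_eq] at hmem
    obtain ⟨a, z, hz, hfz⟩ := Submodule.mem_span_insert.mp hmem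
    have ha : a = 1 := by
      have hne : a ≠ 0 := by
        rintro rfl
        rw [zero_smul, zero_add] at hfz
        exact hWmem f hf (hfz ▸ hz)
      have h2 : ∀ b : ZMod 2, b ≠ 0 → b = 1 := by decide
      exact h2 a hne
    have hz0 : W.mkQ z = 0 := by rwa [Submodule.mkQ_apply, Submodule.Quotient.mk_eq_zero]
    rw [hfz, ha, one_smul, map_add, hz0, add_zero]
  rcases Set.eq_empty_or_nonempty (T ∩ C) with hTC | ⟨e₀, he₀T, he₀C⟩
  · simp [hTC]
  rw [← Nat.not_odd_iff_even]
  intro hodd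
  have hsum0 := circuit_sum_zero hrep hTE hTdep hTmin hTfin
  have h0 : (0 : (α →₀ ZMod 2) ⧸ W) = ∑ a ∈ hTfin.toFinset, W.mkQ (φ a) := by
    rw [← map_sum, hsum0, map_zero]
  have hsplit : ∑ a ∈ hTfin.toFinset, W.mkQ (φ a)
      = ∑ a ∈ hTfin.toFinset.filter (· ∈ C), W.mkQ (φ a) := by
    rw [← Finset.sum_filter_add_sum_filter_not hTfin.toFinset (· ∈ C)]
    have hz : ∑ a ∈ hTfin.toFinset.filter (¬ · ∈ C), W.mkQ (φ a) = 0 := by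
      refine Finset.sum_eq_zero fun a ha => ?_
      rw [Finset.mem_filter, hTfin.mem_toFinset] at ha
      have haH : a ∈ H := ⟨hTE ha.1, ha.2⟩
      rw [Submodule.mkQ_apply, Submodule.Quotient.mk_eq_zero]
      exact Submodule.subset_span ⟨a, haH, rfl⟩
    rw [hz, add_zero]
  have hconst : ∀ a ∈ hTfin.toFinset.filter (· ∈ C), W.mkQ (φ a) = W.mkQ (φ e₀) :=
    fun a ha => hq e₀ he₀C a (Finset.mem_filter.mp ha).2
  have hcardsmul : (0 : (α →₀ ZMod 2) ⧸ W)
      = (hTfin.toFinset.filter (· ∈ C)).card • W.mkQ (φ e₀) := by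
    rw [h0, hsplit, Finset.sum_congr rfl hconst, Finset.sum_const]
  have hcard : (hTfin.toFinset.filter (· ∈ C)).card = (T ∩ C).ncard := by
    rw [Set.ncard_eq_toFinset_card _ (hTfin.subset inter_subset_left)]
    congr 1
    ext a
    simp [Set.Finite.mem_toFinset]
  rw [hcard] at hcardsmul
  have hcast : (((T ∩ C).ncard : ℕ) : ZMod 2) = 1 := by
    rw [← ZMod.natCast_mod, Nat.odd_iff.mp hodd, Nat.cast_one]
  have hxi : W.mkQ (φ e₀) = 0 := by
    have h2 : (((T ∩ C).ncard : ℕ) : ZMod 2) • W.mkQ (φ e₀) = 0 := by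
      rw [Nat.cast_smul_eq_nsmul]
      exact hcardsmul.symm
    rwa [hcast, one_smul] at h2
  exact hWmem e₀ he₀C (by rwa [Submodule.mkQ_apply, Submodule.Quotient.mk_eq_zero] at hxi)


theorem stmt3 (M : Matroid α) (hI4 : InternallyFourConnected M) (hB : Binary M)
    (h3 : EveryElementInThreeTriangles M) :
    ∀ C, Cocircuit M C → ¬ Odd C.ncard := by
  classical
  rintro C hC hodd
  obtain ⟨φ, hrep⟩ := hB
  have hrep' : Rep M φ := hrep
  have hCE : C ⊆ M.E := hC.1
  have hCfin : C.Finite := by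
    by_contra hinf
    rw [Set.Infinite.ncard hinf] at hodd
    simpa using Nat.odd_iff.mp hodd
  have htrifin : ∀ e ∈ C, {T : Set α | IsTriangle M T ∧ e ∈ T}.Finite := by
    intro e he
    exact Set.finite_of_encard_eq_coe (k := 3) (by exact_mod_cast h3 e (hCE he))
  have hTriFin : {T : Set α | IsTriangle M T ∧ (T ∩ C).Nonempty}.Finite := by
    refine Set.Finite.subset (Set.Finite.biUnion hCfin htrifin) ?_
    rintro T ⟨hT, e, heT, heC⟩
    exact Set.mem_biUnion heC ⟨hT, heT⟩
  set Cf := hCfin.toFinset with hCf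
  set Tf := hTriFin.toFinset with hTf
  have key2 : ∀ T ∈ Tf, (Cf.filter (· ∈ T)).card = 2 := by
    intro T hT
    rw [hTriFin.mem_toFinset] at hT
    obtain ⟨⟨hTc, hT3⟩, hTne⟩ := hT
    have hTfin' : T.Finite := Set.finite_of_encard_eq_coe (k := 3) (by exact_mod_cast hT3)
    have heven := even_inter_cocircuit hrep' hC hTc hTfin'
    have hle : (T ∩ C).ncard ≤ 3 := by
      have h := Set.ncard_le_ncard (Set.inter_subset_left (s := T) (t := C)) hTfin'
      rw [show T.ncard = 3 from by rw [Set.ncard_def, hT3]; rfl] at h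
      exact h
    have hpos : 0 < (T ∩ C).ncard :=
      (Set.ncard_pos (hTfin'.subset inter_subset_left)).mpr hTne
    have hcardeq : (Cf.filter (· ∈ T)).card = (T ∩ C).ncard := by
      rw [Set.ncard_eq_toFinset_card _ (hTfin'.subset inter_subset_left)]
      congr 1
      ext a
      simp [hCf, Set.Finite.mem_toFinset, and_comm]
    obtain ⟨m, hm⟩ := heven
    omega
  have key3 : ∀ e ∈ Cf, (Tf.filter (fun T => e ∈ T)).card = 3 := by
    intro e he
    rw [hCfin.mem_toFinset] at he
    have hfe := htrifin e he
    have heq : Tf.filter (fun T => e ∈ T) = hfe.toFinset := by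
      ext T
      simp only [Finset.mem_filter, hTf, Set.Finite.mem_toFinset, Set.mem_setOf_eq]
      constructor
      · rintro ⟨⟨hT, -⟩, heT⟩; exact ⟨hT, heT⟩
      · rintro ⟨hT, heT⟩; exact ⟨⟨hT, ⟨e, heT, he⟩⟩, heT⟩
    rw [heq]
    have := hfe.encard_eq_coe_toFinset_card
    rw [h3 e (hCE he)] at this
    exact_mod_cast this.symm
  have hdouble : ∑ e ∈ Cf, (Tf.filter (fun T => e ∈ T)).card
      = ∑ T ∈ Tf, (Cf.filter (· ∈ T)).card := by
    simp_rw [Finset.card_filter]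
    exact Finset.sum_comm
  rw [Finset.sum_const_nat key3, Finset.sum_const_nat key2] at hdouble
  have hcardC : C.ncard = Cf.card := Set.ncard_eq_toFinset_card _ hCfin
  rw [hcardC] at hodd
  obtain ⟨m, hm⟩ := hodd
  omega



end Paper
end

section
/- Let M be an internally 4-connected binary matroid in which every element is in exactly three triangles and whose ground set has at least 14 elements, and suppose M has no 4-element cocircuit. Let (X, Y) be an exact 4-separation of M with X ⊆ fcl(Y). Then X is coindependent (that is, independent in the dual matroid M*), the rank of X is 3, and X is contained in the closure of Y. -/
open Set Matroid

namespace Paper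

variable {α : Type*}

section Lemmas
open Submodule
variable {M : Matroid α} {X Y I : Set α} {e x : α}

lemma indep_le_eRank (h : M.Indep I) (hIX : I ⊆ X) : I.encard ≤ eRank M X :=
  le_iSup₂_of_le I ⟨h, hIX⟩ le_rfl

lemma eRank_le_iff {c : ℕ∞} : eRank M X ≤ c ↔ ∀ I, M.Indep I → I ⊆ X → I.encard ≤ c := by
  simp [eRank, iSup₂_le_iff, and_imp]

lemma Basis'_eRank (hI : M.IsBasis' I X) : eRank M X = I.encard := by
  refine le_antisymm (eRank_le_iff.2 fun J hJ hJX => ?_) (indep_le_eRank hI.indep hI.subset)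
  obtain ⟨J', hJ', hJJ'⟩ := hJ.subset_isBasis'_of_subset hJX
  exact le_trans (encard_mono hJJ') (hJ'.encard_eq_encard hI).le

lemma eRank_mono (h : X ⊆ Y) : eRank M X ≤ eRank M Y :=
  eRank_le_iff.2 fun I hI hIX => indep_le_eRank hI (hIX.trans h)

lemma eRank_le_encard : eRank M X ≤ X.encard :=
  eRank_le_iff.2 fun _ _ h => encard_mono h

lemma eRank_le_eRk : eRank M X ≤ eRk M :=
  eRank_le_iff.2 fun I hI _ => indep_le_eRank hI hI.subset_ground

lemma eRank_closure (hX : X ⊆ M.E) : eRank M (M.closure X) = eRank M X := by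
  obtain ⟨I, hI⟩ := M.exists_isBasis X
  rw [Basis'_eRank hI.isBasis_closure_right.isBasis', Basis'_eRank hI.isBasis']

lemma eRank_insert_le : eRank M (insert x X) ≤ eRank M X + 1 := by
  refine eRank_le_iff.2 fun I hI hIX => ?_
  by_cases hx : x ∈ I
  · calc I.encard = (I \ {x}).encard + 1 := (encard_diff_singleton_add_one hx).symm
      _ ≤ eRank M X + 1 := by
          refine add_le_add_left (indep_le_eRank (hI.diff _) ?_) 1
          rw [diff_subset_iff, ← Set.insert_eq]; exact hIX
  · refine le_trans (indep_le_eRank hI fun a ha => ?_) le_self_add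
    rcases hIX ha with h | h
    · exact absurd (h ▸ ha) hx
    · exact h

lemma eRank_insert_not_mem_closure (hX : X ⊆ M.E) (hx : x ∈ M.E) (h : x ∉ M.closure X) :
    eRank M (insert x X) = eRank M X + 1 := by
  obtain ⟨I, hI⟩ := M.exists_isBasis X
  have hxI : x ∉ M.closure I := by rwa [hI.closure_eq_closure]
  have hxI' : x ∉ I := fun hxi => hxI (M.subset_closure I hI.indep.subset_ground hxi)
  have hind : M.Indep (insert x I) := by
    rw [hI.indep.insert_indep_iff_of_notMem hxI']
    exact ⟨hx, hxI⟩
  refine le_antisymm eRank_insert_le ?_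
  have := indep_le_eRank hind (insert_subset_insert hI.subset)
  rw [encard_insert_of_notMem hxI'] at this
  rwa [Basis'_eRank hI.isBasis']

lemma flat_eq_ground {F : Set α} (hfin : eRk M ≠ ⊤) (hFE : F ⊆ M.E) (hFc : M.closure F = F)
    (h : eRank M F = eRk M) :
    F = M.E := by
  refine subset_antisymm hFE fun e he => by_contra fun heF => ?_
  have hecl : e ∉ M.closure F := by rwa [hFc]
  have h1 : eRank M (insert e F) = eRank M F + 1 :=
    eRank_insert_not_mem_closure hFE he hecl
  have h2 : eRank M (insert e F) ≤ eRk M := eRank_le_eRk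
  rw [h1, h] at h2
  exact (ENat.add_one_le_iff hfin).1 h2 |>.false


variable {M : Matroid α} {φ : α → (α →₀ ZMod 2)} {S I : Set α} {e : α}

lemma mem_span_of_mem_closure
    (hrep : ∀ I, I ⊆ M.E → (M.Indep I ↔ LinearIndependent (ZMod 2) (fun x : I => φ x.1)))
    (hS : S ⊆ M.E) (he : e ∈ M.closure S) :
    φ e ∈ span (ZMod 2) (φ '' S) := by
  obtain ⟨I, hI⟩ := M.exists_isBasis S
  by_cases heI : e ∈ I
  · exact subset_span ⟨e, hI.subset heI, rfl⟩
  have heI' : e ∈ M.closure I := by rwa [hI.closure_eq_closure]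
  have hdep : M.Dep (insert e I) := hI.indep.insert_dep_iff.2 ⟨heI', heI⟩
  by_contra hspan
  have hspan' : φ e ∉ span (ZMod 2) (φ '' I) :=
    fun hmem => hspan (span_mono (image_mono hI.subset) hmem)
  have hlin : LinearIndependent (ZMod 2) (fun x : I => φ x.1) :=
    (hrep I (hI.subset.trans hS)).1 hI.indep
  have : LinearIndependent (ZMod 2) (fun x : ↥(insert e I) => φ x.1) :=
    (linearIndepOn_insert heI).2 ⟨hlin, hspan'⟩
  exact hdep.not_indep ((hrep _ (insert_subset (mem_ground_of_mem_closure he)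
    (hI.subset.trans hS))).2 this)

lemma mem_closure_of_mem_span
    (hrep : ∀ I, I ⊆ M.E → (M.Indep I ↔ LinearIndependent (ZMod 2) (fun x : I => φ x.1)))
    (hS : S ⊆ M.E) (he : e ∈ M.E) (h : φ e ∈ span (ZMod 2) (φ '' S)) :
    e ∈ M.closure S := by
  obtain ⟨I, hI⟩ := M.exists_isBasis S
  have hIS : span (ZMod 2) (φ '' S) ≤ span (ZMod 2) (φ '' I) := by
    rw [span_le]
    rintro - ⟨s, hs, rfl⟩
    exact mem_span_of_mem_closure hrep (hI.indep.subset_ground) (hI.subset_closure hs)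
  by_contra hecl
  have heI : e ∉ I := fun h' => hecl (M.mem_closure_of_mem (hI.subset h') hS)
  have hind : M.Indep (insert e I) := by
    rw [hI.indep.insert_indep_iff_of_notMem heI]
    refine ⟨he, by rwa [hI.closure_eq_closure]⟩
  have hlin : LinearIndependent (ZMod 2) (fun x : ↥(insert e I) => φ x.1) :=
    (hrep _ (insert_subset he (hI.indep.subset_ground))).1 hind
  exact ((linearIndepOn_insert heI).1 hlin).2 (hIS h)


section NoLoops
variable {M : Matroid α} {φ : α → (α →₀ ZMod 2)} {e f : α}

lemma enat_le_pred {x : ℕ∞} {n : ℕ} (h : ¬ (n + 1 : ℕ∞) ≤ x) : x ≤ (n : ℕ∞) := by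
  have hlt : x < (n + 1 : ℕ∞) := lt_of_not_ge h
  have hne : x ≠ ⊤ := hlt.ne_top
  lift x to ℕ using hne
  exact_mod_cast Nat.lt_succ_iff.1 (by exact_mod_cast hlt)

lemma no_loop (h3c : NConnected M 3) (hE : (14 : ℕ∞) ≤ M.E.encard) (he : e ∈ M.E) :
    M.Indep {e} := by
  by_contra hdep
  have hr0 : eRank M {e} ≤ 0 := by
    refine eRank_le_iff.2 fun I hI hIe => ?_
    rcases subset_singleton_iff_eq.1 hIe with rfl | rfl
    · simp
    · exact absurd hI hdep
  obtain ⟨b, hb, hbe⟩ := Set.exists_ne_of_one_lt_encard (lt_of_lt_of_le (by norm_num) hE) e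
  have hne : (M.E \ {e}).Nonempty := ⟨b, hb, by simpa using hbe⟩
  refine h3c 1 le_rfl (by norm_num) {e} (M.E \ {e}) ⟨?_, ?_, ?_, ?_, ?_⟩
  · exact disjoint_sdiff_right.mono_left (by simp)
  · rw [union_diff_cancel' (by simpa using he) (singleton_subset_iff.2 he)]
  · simpa using add_le_add (le_trans hr0 le_rfl) (eRank_le_eRk (X := M.E \ {e}))
  · simp
  · simpa [Set.one_le_encard_iff_nonempty] using hne

lemma phi_ne_zero
    (hrep : ∀ I, I ⊆ M.E → (M.Indep I ↔ LinearIndependent (ZMod 2) (fun x : I => φ x.1)))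
    (h3c : NConnected M 3) (hE : (14 : ℕ∞) ≤ M.E.encard) (he : e ∈ M.E) : φ e ≠ 0 := by
  have hind := (hrep {e} (singleton_subset_iff.2 he)).1 (no_loop h3c hE he)
  exact hind.ne_zero ⟨e, rfl⟩

lemma phi_injOn
    (hrep : ∀ I, I ⊆ M.E → (M.Indep I ↔ LinearIndependent (ZMod 2) (fun x : I => φ x.1)))
    (h3c : NConnected M 3) (hE : (14 : ℕ∞) ≤ M.E.encard) : InjOn φ M.E := by
  intro e he f hf hef
  by_contra hne
  have hpair : ({e, f} : Set α) ⊆ M.E := insert_subset_iff.2 ⟨he, singleton_subset_iff.2 hf⟩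
  have hdep : ¬ M.Indep {e, f} := by
    intro hind
    have hlin := (hrep _ hpair).1 hind
    have := hlin.injective (a₁ := ⟨e, by simp⟩) (a₂ := ⟨f, by simp⟩) (by simpa using hef)
    exact hne (congrArg Subtype.val this)
  have hr1 : eRank M {e, f} ≤ 1 := by
    refine eRank_le_iff.2 fun I hI hIp => ?_
    by_cases hIeq : I = {e, f}
    · exact absurd (hIeq ▸ hI) hdep
    · have hss : I ⊂ {e, f} := ssubset_of_subset_of_ne hIp hIeq
      have := ((Set.toFinite ({e,f} : Set α)).subset hIp).encard_lt_encard hss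
      rw [Set.encard_pair hne] at this
      exact enat_le_pred (by exact_mod_cast not_le.2 this)
  have hYbig : (2 : ℕ∞) ≤ (M.E \ {e, f}).encard := by
    by_contra hlt
    have h1 : (M.E \ {e, f}).encard ≤ 1 := enat_le_pred (by exact_mod_cast hlt)
    have hcover : M.E.encard ≤ (M.E \ {e, f}).encard + ({e, f} : Set α).encard := by
      exact le_trans (encard_mono (Set.subset_diff_union _ _)) (Set.encard_union_le _ _)
    rw [Set.encard_pair hne] at hcover
    have : (14 : ℕ∞) ≤ 1 + 2 := le_trans hE (le_trans hcover (add_le_add_left h1 2))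
    norm_num at this
  refine h3c 2 (by norm_num) (by norm_num) {e, f} (M.E \ {e, f}) ⟨?_, ?_, ?_, ?_, ?_⟩
  · exact disjoint_sdiff_right.mono_left le_rfl
  · rw [union_diff_cancel' (by simpa using hpair) hpair]
  · calc eRank M {e,f} + eRank M (M.E \ {e,f}) ≤ 1 + eRk M :=
          add_le_add hr1 eRank_le_eRk
      _ = eRk M + ((2 - 1 : ℕ) : ℕ∞) := by norm_num [add_comm]
  · exact (Set.encard_pair hne).symm.le
  · exact hYbig

end NoLoops
section Finiteness
variable {M : Matroid α} {φ : α → (α →₀ ZMod 2)}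

lemma span_insert_subset_union {K : Type*} [Field K] {Mod : Type*} [AddCommGroup Mod] [Module K Mod]
    (hK : ∀ c : K, c = 0 ∨ c = 1) (v : Mod) (S : Set Mod) :
    ((span K (insert v S) : Submodule K Mod) : Set Mod) ⊆
      (span K S : Submodule K Mod) ∪ (fun z => v + z) '' (span K S : Submodule K Mod) := by
  intro x hx
  obtain ⟨c, z, hz, rfl⟩ := Submodule.mem_span_insert.1 hx
  rcases hK c with rfl | rfl
  · left; simpa using hz
  · right; exact ⟨z, hz, by simp⟩

lemma zmod2_cases (c : ZMod 2) : c = 0 ∨ c = 1 := by revert c; decide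

lemma span_finite_of_finite {Mod : Type*} [AddCommGroup Mod] [Module (ZMod 2) Mod]
    {S : Set Mod} (hS : S.Finite) :
    ((span (ZMod 2) S : Submodule (ZMod 2) Mod) : Set Mod).Finite := by
  refine Set.Finite.induction_on
    (motive := fun T _ => ((span (ZMod 2) T : Submodule (ZMod 2) Mod) : Set Mod).Finite) S hS (by simp) ?_
  intro a s _ _ ih
  exact Set.Finite.subset (ih.union (ih.image _)) (span_insert_subset_union zmod2_cases a s)

lemma span_encard_le {Mod : Type*} [AddCommGroup Mod] [Module (ZMod 2) Mod]
    (v : Mod) (S : Set Mod) :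
    ((span (ZMod 2) (insert v S) : Submodule (ZMod 2) Mod) : Set Mod).encard ≤
      2 * ((span (ZMod 2) S : Submodule (ZMod 2) Mod) : Set Mod).encard := by
  refine le_trans (encard_mono (span_insert_subset_union zmod2_cases v S)) ?_
  refine le_trans (Set.encard_union_le _ _) ?_
  rw [two_mul]
  exact add_le_add le_rfl (Set.encard_image_le _ _)

lemma ground_finite
    (hrep : ∀ I, I ⊆ M.E → (M.Indep I ↔ LinearIndependent (ZMod 2) (fun x : I => φ x.1)))
    (h3c : NConnected M 3) (hE : (14 : ℕ∞) ≤ M.E.encard) (hfin : eRk M ≠ ⊤) :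
    M.E.Finite := by
  obtain ⟨B, hB⟩ := M.exists_isBase
  have hBr : eRk M = B.encard := Basis'_eRank hB.isBasis_ground.isBasis'
  have hBfin : B.Finite := by
    rw [← Set.encard_ne_top_iff, ← hBr]; exact hfin
  have himg : φ '' M.E ⊆ (span (ZMod 2) (φ '' B) : Submodule (ZMod 2) _) := by
    rintro - ⟨e, he, rfl⟩
    exact mem_span_of_mem_closure hrep hB.subset_ground (hB.closure_eq ▸ he)
  have hfinspan := span_finite_of_finite (hBfin.image φ)
  exact Set.Finite.of_finite_image (hfinspan.subset himg) (phi_injOn hrep h3c hE)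

end Finiteness

section Cocircuits
variable {M : Matroid α} {C D Z : Set α} {x : α}

lemma exists_circuit_subset_aux (N : Matroid α) (hEfin : N.E.Finite) :
    ∀ n : ℕ, ∀ D, D ⊆ N.E → D.ncard ≤ n → ¬ N.Indep D → ∃ C, C ⊆ D ∧ Circuit N C := by
  intro n
  induction n with
  | zero =>
      intro D hDE hcard hdep
      have hDfin : D.Finite := hEfin.subset hDE
      rw [Nat.le_zero, Set.ncard_eq_zero hDfin] at hcard
      exact absurd (hcard ▸ N.empty_indep) hdep
  | succ n ih =>
      intro D hDE hcard hdep
      by_cases hall : ∀ D', D' ⊂ D → N.Indep D'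
      · exact ⟨D, Subset.rfl, hDE, hdep, hall⟩
      · push_neg at hall
        obtain ⟨D', hD'sub, hD'dep⟩ := hall
        have hDfin : D.Finite := hEfin.subset hDE
        have : D'.ncard ≤ n := by
          have := Set.ncard_lt_ncard hD'sub hDfin
          omega
        obtain ⟨C, hCD, hC⟩ := ih D' (hD'sub.subset.trans hDE) this hD'dep
        exact ⟨C, hCD.trans hD'sub.subset, hC⟩

lemma exists_circuit_subset (N : Matroid α) (hEfin : N.E.Finite) (hD : ¬ N.Indep D)
    (hDE : D ⊆ N.E) : ∃ C, C ⊆ D ∧ Circuit N C :=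
  exists_circuit_subset_aux N hEfin D.ncard D hDE le_rfl hD

lemma cocircuit_of_dual_closure (hEfin : M.E.Finite) (hZE : Z ⊆ M.E)
    (hx : x ∈ M✶.closure Z) (hxZ : x ∉ Z) :
    ∃ C, Cocircuit M C ∧ x ∈ C ∧ C ⊆ insert x Z := by
  obtain ⟨I, hI⟩ := M✶.exists_isBasis Z (by rwa [dual_ground])
  have hxI : x ∈ M✶.closure I := by rwa [hI.closure_eq_closure]
  have hxI' : x ∉ I := fun h => hxZ (hI.subset h)
  have hdep : M✶.Dep (insert x I) := hI.indep.insert_dep_iff.2 ⟨hxI, hxI'⟩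
  obtain ⟨C, hCsub, hC⟩ := exists_circuit_subset M✶ (by rwa [dual_ground]) hdep.not_indep
    hdep.subset_ground
  have hxC : x ∈ C := by
    by_contra hxC
    have : C ⊆ I := fun a ha => by
      rcases Set.mem_insert_iff.1 (hCsub ha) with rfl | h
      · exact absurd ha hxC
      · exact h
    exact hC.2.1 (hI.indep.subset this)
  exact ⟨C, hC, hxC, hCsub.trans (insert_subset_insert hI.subset)⟩

lemma cocircuit_not_mem_closure_compl (hC : Cocircuit M C) (hxC : x ∈ C) :
    x ∉ M.closure (M.E \ C) := by
  intro hmem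
  have hCE : C ⊆ M.E := hC.1
  have hCdiff : M✶.Indep (C \ {x}) := hC.2.2 _ (Set.sdiff_singleton_ssubset.2 hxC)
  obtain ⟨-, B0, hB0, hdisj⟩ := dual_indep_iff_exists'.1 hCdiff
  have hgetIndep : ∀ B1, M.IsBase B1 → Disjoint C B1 → False := by
    intro B1 hB1 hd
    exact hC.2.1 (dual_indep_iff_exists'.2 ⟨hCE, B1, hB1, hd⟩)
  by_cases hxB0 : x ∈ B0
  · have hB0x : x ∉ M.closure (B0 \ {x}) := hB0.indep.notMem_closure_diff_of_mem hxB0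
    have hsub : ¬ (M.E \ C ⊆ M.closure (B0 \ {x})) := fun hs =>
      hB0x (closure_subset_closure_of_subset_closure hs hmem)
    obtain ⟨s, hsEC, hscl⟩ := not_subset.1 hsub
    have hsB0x : s ∉ B0 \ {x} := fun h =>
      hscl (M.subset_closure _ ((diff_subset.trans hB0.subset_ground)) h)
    have hsx : s ≠ x := fun h => hsEC.2 (h ▸ hxC)
    have hsB0 : s ∉ B0 := fun h => hsB0x ⟨h, hsx⟩
    have hind : M.Indep (insert s (B0 \ {x})) := by
      rw [(hB0.indep.diff _).insert_indep_iff_of_notMem hsB0x]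
      exact ⟨hsEC.1, hscl⟩
    have hbase : M.IsBase (insert s (B0 \ {x})) := hB0.exchange_isBase_of_indep hsB0 hind
    refine hgetIndep _ hbase (disjoint_left.2 fun a haC => ?_)
    rintro (rfl | ⟨haB0, hax⟩)
    · exact hsEC.2 haC
    · exact (disjoint_left.1 hdisj ⟨haC, hax⟩) haB0
  · refine hgetIndep _ hB0 (disjoint_left.2 fun a haC haB0 => ?_)
    rcases eq_or_ne a x with rfl | hax
    · exact hxB0 haB0
    · exact (disjoint_left.1 hdisj ⟨haC, hax⟩) haB0

lemma closure_compl_diff_singleton (hC : Cocircuit M C) (hx0 : x ∈ C) :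
    M.closure (M.E \ (C \ {x})) = M.E := by
  have hCdiff : M✶.Indep (C \ {x}) := hC.2.2 _ (Set.sdiff_singleton_ssubset.2 hx0)
  obtain ⟨-, B, hB, hdisj⟩ := dual_indep_iff_exists'.1 hCdiff
  refine subset_antisymm (closure_subset_ground _ _) ?_
  have hBsub : B ⊆ M.E \ (C \ {x}) :=
    subset_diff.2 ⟨hB.subset_ground, hdisj.symm⟩
  calc M.E = M.closure B := hB.closure_eq.symm
    _ ⊆ M.closure (M.E \ (C \ {x})) := M.closure_subset_closure hBsub

end Cocircuits

section BinaryArith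
variable {M : Matroid α} {φ : α → (α →₀ ZMod 2)} {C T S : Set α} {x0 y e p t : α}

lemma add_self_zero (v : α →₀ ZMod 2) : v + v = 0 := by
  have : v + v = (2 : ZMod 2) • v := by rw [two_smul]
  rw [this, show (2 : ZMod 2) = 0 by decide, zero_smul]

lemma neg_eq_self (v : α →₀ ZMod 2) : -v = v := neg_eq_of_add_eq_zero_left (add_self_zero v)

lemma circuit_sum_zero_s7
    (hrep : ∀ I, I ⊆ M.E → (M.Indep I ↔ LinearIndependent (ZMod 2) (fun x : I => φ x.1)))
    (hinj : InjOn φ M.E) (hC : Circuit M C) (hCfin : C.Finite) :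
    ∑ e ∈ hCfin.toFinset, φ e = 0 := by
  classical
  have hCE : C ⊆ M.E := hC.1
  have hne : C.Nonempty := by
    rw [nonempty_iff_ne_empty]
    rintro rfl
    exact hC.2.1 M.empty_indep
  obtain ⟨c, hc⟩ := hne
  set D := C \ {c} with hD
  have hDfin : D.Finite := hCfin.subset diff_subset
  have hDind : M.Indep D := hC.2.2 _ (Set.sdiff_singleton_ssubset.2 hc)
  have hceq : insert c D = C := by
    rw [hD, Set.insert_diff_singleton, Set.insert_eq_self.2 hc]
  have hdep : M.Dep C := ⟨hC.2.1, hC.1⟩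
  have hccl : c ∈ M.closure D := (hDind.insert_dep_iff.1 (hceq ▸ hdep)).1
  have hspan : φ c ∈ span (ZMod 2) (φ '' D) :=
    mem_span_of_mem_closure hrep (diff_subset.trans hCE) hccl
  obtain ⟨l, hlsupp, hlsum⟩ := mem_span_set.1 hspan
  have hsum1 : ∑ v ∈ l.support, v = φ c := by
    rw [← hlsum, Finsupp.sum]
    refine Finset.sum_congr rfl fun v hv => ?_
    rcases zmod2_cases (l v) with h0 | h1
    · exact absurd h0 (Finsupp.mem_support_iff.1 hv)
    · rw [h1, one_smul]
  set D₀ : Set α := {d ∈ D | φ d ∈ (l.support : Set (α →₀ ZMod 2))} with hD₀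
  have hD₀D : D₀ ⊆ D := fun d hd => hd.1
  have hD₀fin : D₀.Finite := hDfin.subset hD₀D
  have himg : φ '' D₀ = ↑l.support := by
    apply subset_antisymm
    · rintro - ⟨d, hd, rfl⟩
      exact hd.2
    · intro v hv
      obtain ⟨d, hd, rfl⟩ := hlsupp hv
      exact ⟨d, ⟨hd, hv⟩, rfl⟩
  have hfimg : hD₀fin.toFinset.image φ = l.support := by
    apply Finset.coe_injective
    rw [Finset.coe_image, Set.Finite.coe_toFinset, himg]
  have hsum2 : ∑ d ∈ hD₀fin.toFinset, φ d = ∑ v ∈ l.support, v := by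
    rw [← hfimg, Finset.sum_image]
    intro a ha b hb hab
    exact hinj (hCE (diff_subset (hD₀D (hD₀fin.mem_toFinset.1 ha))))
      (hCE (diff_subset (hD₀D (hD₀fin.mem_toFinset.1 hb)))) hab
  have hφc : φ c ∈ span (ZMod 2) (φ '' D₀) := by
    rw [← hsum1, ← hsum2]
    refine Submodule.sum_mem _ fun d hd => subset_span ⟨d, hD₀fin.mem_toFinset.1 hd, rfl⟩
  have hcD₀ : c ∉ D₀ := fun h => (hD₀D h).2 rfl
  have hnind : ¬ M.Indep (insert c D₀) := by
    intro hind
    have hlin := (hrep _ (insert_subset (hCE hc) ((hD₀D.trans diff_subset).trans hCE))).1 hind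
    exact ((linearIndepOn_insert hcD₀).1 hlin).2 hφc
  have hCL : insert c D₀ = C := by
    by_contra hne'
    exact hnind (hC.2.2 _ (ssubset_of_subset_of_ne
      (insert_subset hc (hD₀D.trans diff_subset)) hne'))
  have hD₀eq : D₀ = D := by
    refine subset_antisymm hD₀D fun a haD => ?_
    have haC : a ∈ C := diff_subset haD
    have : a ∈ insert c D₀ := hCL ▸ haC
    rcases Set.mem_insert_iff.1 this with rfl | h
    · exact absurd rfl haD.2
    · exact h
  have hfeq : hCfin.toFinset = insert c hDfin.toFinset := by
    ext a
    simp only [Set.Finite.mem_toFinset, Finset.mem_insert]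
    constructor
    · intro haC
      rcases eq_or_ne a c with rfl | hac
      · exact Or.inl rfl
      · exact Or.inr ⟨haC, hac⟩
    · rintro (rfl | h)
      · exact hc
      · exact diff_subset h
  have hcD : c ∉ hDfin.toFinset := by simp [hD]
  rw [hfeq, Finset.sum_insert hcD]
  have : ∑ d ∈ hDfin.toFinset, φ d = φ c := by
    rw [← hsum1, ← hsum2]
    congr 1
    ext a
    simp [hD₀eq]
  rw [this, add_self_zero]

lemma tri_finite (hT : IsTriangle M T) : T.Finite := by
  rw [← Set.encard_ne_top_iff, hT.2]
  decide

lemma tri_sum_zero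
    (hrep : ∀ I, I ⊆ M.E → (M.Indep I ↔ LinearIndependent (ZMod 2) (fun x : I => φ x.1)))
    (hinj : InjOn φ M.E) (hT : IsTriangle M T) :
    ∑ e ∈ (tri_finite hT).toFinset, φ e = 0 :=
  circuit_sum_zero_s7 hrep hinj hT.1 (tri_finite hT)

lemma tri_third
    (hrep : ∀ I, I ⊆ M.E → (M.Indep I ↔ LinearIndependent (ZMod 2) (fun x : I => φ x.1)))
    (hinj : InjOn φ M.E) (hT : IsTriangle M T)
    (he : e ∈ T) (hp : p ∈ T) (hep : e ≠ p) (ht : t ∈ T) (hte : t ≠ e) (htp : t ≠ p) :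
    φ t = φ e + φ p := by
  have hsub : ({t, e, p} : Set α) ⊆ T := by
    intro a ha
    rcases ha with rfl | rfl | rfl
    · exact ht
    · exact he
    · exact hp
  have hcard : ({t, e, p} : Set α).encard = 3 := by
    rw [Set.encard_insert_of_notMem (by simp [hte, htp]), Set.encard_pair hep]
    rfl
  have heq : ({t, e, p} : Set α) = T :=
    ((tri_finite hT).subset hsub).eq_of_subset_of_encard_le hsub (by rw [hT.2, hcard])
  classical
  have hfeq : (tri_finite hT).toFinset = ({t, e, p} : Finset α) := by
    ext a
    simp [← heq]
  have hsum := tri_sum_zero hrep hinj hT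
  rw [hfeq] at hsum
  rw [Finset.sum_insert (by simp [hte, htp]), Finset.sum_insert (by simp [hep]),
    Finset.sum_singleton] at hsum
  have hres := eq_neg_of_add_eq_zero_left hsum
  rwa [neg_eq_self] at hres

lemma tri_exists_third (hT : IsTriangle M T) (hep : e ≠ p) :
    ∃ t ∈ T, t ≠ e ∧ t ≠ p := by
  by_contra h
  push_neg at h
  have hsub : T ⊆ {e, p} := by
    intro a ha
    rcases eq_or_ne a e with rfl | hae
    · exact Or.inl rfl
    · exact Or.inr (h a ha hae)
  have := encard_mono hsub
  rw [hT.2] at this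
  have h2 : ({e, p} : Set α).encard ≤ 2 :=
    le_trans (Set.encard_insert_le _ _) (by rw [Set.encard_singleton]; norm_num)
  have : (3 : ℕ∞) ≤ 2 := le_trans this h2
  norm_num at this

lemma tri_unique
    (hrep : ∀ I, I ⊆ M.E → (M.Indep I ↔ LinearIndependent (ZMod 2) (fun x : I => φ x.1)))
    (hinj : InjOn φ M.E) (hE14 : (14 : ℕ∞) ≤ M.E.encard) (h3c : NConnected M 3)
    {T1 T2 : Set α} (hT1 : IsTriangle M T1) (hT2 : IsTriangle M T2)
    (he1 : e ∈ T1) (hp1 : p ∈ T1) (he2 : e ∈ T2) (hp2 : p ∈ T2) (hep : e ≠ p) :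
    T1 = T2 := by
  obtain ⟨t1, ht1, ht1e, ht1p⟩ := tri_exists_third hT1 hep
  obtain ⟨t2, ht2, ht2e, ht2p⟩ := tri_exists_third hT2 hep
  have hv1 : φ t1 = φ e + φ p := tri_third hrep hinj hT1 he1 hp1 hep ht1 ht1e ht1p
  have hv2 : φ t2 = φ e + φ p := tri_third hrep hinj hT2 he2 hp2 hep ht2 ht2e ht2p
  have ht12 : t1 = t2 := hinj (hT1.1.1 ht1) (hT2.1.1 ht2) (hv1.trans hv2.symm)
  have key : ∀ (T : Set α), IsTriangle M T → e ∈ T → p ∈ T →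
      ∀ t ∈ T, t ≠ e → t ≠ p → T = {t, e, p} := by
    intro T hT heT hpT t htT hte htp
    refine ((Set.toFinite ({t, e, p} : Set α)).eq_of_subset_of_encard_le ?_ (by
      rw [hT.2, Set.encard_insert_of_notMem (by simp [hte, htp]), Set.encard_pair hep]
      rfl)).symm
    intro a ha
    rcases ha with rfl | rfl | rfl
    · exact htT
    · exact heT
    · exact hpT
  rw [key T1 hT1 he1 hp1 t1 ht1 ht1e ht1p, key T2 hT2 he2 hp2 t2 ht2 ht2e ht2p, ht12]

lemma cocircuit_cong
    (hrep : ∀ I, I ⊆ M.E → (M.Indep I ↔ LinearIndependent (ZMod 2) (fun x : I => φ x.1)))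
    (hC : Cocircuit M C) (hx0 : x0 ∈ C) (hy : y ∈ C) :
    φ y - φ x0 ∈ span (ZMod 2) (φ '' (M.E \ C)) := by
  have hCE : C ⊆ M.E := hC.1
  rcases eq_or_ne y x0 with rfl | hyne
  · simp
  have hclE := closure_compl_diff_singleton hC hx0
  have hyE : y ∈ M.E := hCE hy
  have hymem : y ∈ M.closure (M.E \ (C \ {x0})) := hclE.symm ▸ hyE
  have hspan : φ y ∈ span (ZMod 2) (φ '' (M.E \ (C \ {x0}))) :=
    mem_span_of_mem_closure hrep diff_subset hymem
  have hsetid : M.E \ (C \ {x0}) = insert x0 (M.E \ C) := by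
    ext a
    simp only [mem_diff, mem_singleton_iff, mem_insert_iff, not_and, not_not]
    constructor
    · rintro ⟨haE, h⟩
      by_cases haC : a ∈ C
      · exact Or.inl (h haC)
      · exact Or.inr ⟨haE, haC⟩
    · rintro (rfl | ⟨haE, haC⟩)
      · exact ⟨hCE hx0, fun _ => rfl⟩
      · exact ⟨haE, fun h => absurd h haC⟩
  rw [hsetid, Set.image_insert_eq] at hspan
  obtain ⟨a, z, hz, heq⟩ := Submodule.mem_span_insert.1 hspan
  rcases zmod2_cases a with rfl | rfl
  · rw [zero_smul, zero_add] at heq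
    have : y ∈ M.closure (M.E \ C) :=
      mem_closure_of_mem_span hrep diff_subset hyE (heq ▸ hz)
    exact absurd this (cocircuit_not_mem_closure_compl hC hy)
  · rw [one_smul] at heq
    rw [heq]
    simpa using hz

lemma even_of_sum_mem
    (hrep : ∀ I, I ⊆ M.E → (M.Indep I ↔ LinearIndependent (ZMod 2) (fun x : I => φ x.1)))
    (hC : Cocircuit M C) (hx0 : x0 ∈ C) (s : Finset α) (hsC : ∀ e ∈ s, e ∈ C)
    (hsum : ∑ e ∈ s, φ e ∈ span (ZMod 2) (φ '' (M.E \ C))) :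
    Even s.card := by
  have hdiff : ∑ e ∈ s, (φ e - φ x0) ∈ span (ZMod 2) (φ '' (M.E \ C)) :=
    Submodule.sum_mem _ fun e he => cocircuit_cong hrep hC hx0 (hsC e he)
  rw [Finset.sum_sub_distrib, Finset.sum_const] at hdiff
  have hsmul : s.card • φ x0 ∈ span (ZMod 2) (φ '' (M.E \ C)) := by
    have := Submodule.sub_mem _ hsum hdiff
    simpa using this
  by_contra hodd
  obtain ⟨k, hk⟩ := Nat.not_even_iff_odd.1 hodd
  have hval : s.card • φ x0 = φ x0 := by
    rw [hk, add_nsmul, one_nsmul, mul_nsmul]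
    rw [show (2 : ℕ) • φ x0 = 0 by rw [two_nsmul, add_self_zero], smul_zero, zero_add]
  rw [hval] at hsmul
  have : x0 ∈ M.closure (M.E \ C) :=
    mem_closure_of_mem_span hrep diff_subset (hC.1 hx0) hsmul
  exact absurd this (cocircuit_not_mem_closure_compl hC hx0)

end BinaryArith

section CocircuitSize
variable {M : Matroid α} {φ : α → (α →₀ ZMod 2)} {C T : Set α} {e : α}

lemma triangle_set_finite (hEfin : M.E.Finite) : {T : Set α | IsTriangle M T}.Finite := by
  refine Set.Finite.subset hEfin.finite_subsets fun T hT => hT.1.1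

lemma ground_sum_zero
    (hrep : ∀ I, I ⊆ M.E → (M.Indep I ↔ LinearIndependent (ZMod 2) (fun x : I => φ x.1)))
    (hinj : InjOn φ M.E) (h3 : EveryElementInThreeTriangles M) (hEfin : M.E.Finite) :
    ∑ e ∈ hEfin.toFinset, φ e = 0 := by
  classical
  set tT := (triangle_set_finite (M := M) hEfin).toFinset with htT
  set tE := hEfin.toFinset with htE
  have hS0 : ∑ T ∈ tT, ∑ e ∈ tE, (if e ∈ T then φ e else 0) = 0 := by
    refine Finset.sum_eq_zero fun T hT => ?_
    have hTtri : IsTriangle M T := by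
      have := (triangle_set_finite (M := M) hEfin).mem_toFinset.1 hT
      exact this
    have hfilter : tE.filter (fun e => e ∈ T) = (tri_finite hTtri).toFinset := by
      ext a
      simp only [Finset.mem_filter, Set.Finite.mem_toFinset, htE]
      exact ⟨fun h => h.2, fun h => ⟨hTtri.1.1 h, h⟩⟩
    rw [← Finset.sum_filter, hfilter, tri_sum_zero hrep hinj hTtri]
  rw [Finset.sum_comm] at hS0
  have hinner : ∀ e ∈ tE, ∑ T ∈ tT, (if e ∈ T then φ e else 0) = φ e := by
    intro e he
    rw [← Finset.sum_filter, Finset.sum_const]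
    have hcard : (tT.filter (fun T => e ∈ T)).card = 3 := by
      have hset : ↑(tT.filter (fun T => e ∈ T)) = {T : Set α | IsTriangle M T ∧ e ∈ T} := by
        ext T
        simp [htT, Finset.coe_filter]
      have henc := h3 e (hEfin.mem_toFinset.1 he)
      rw [← hset, Set.encard_coe_eq_coe_finsetCard] at henc
      exact_mod_cast henc
    rw [hcard, show (3 : ℕ) = 2 + 1 by rfl, add_nsmul, two_nsmul, add_self_zero,
      zero_add, one_nsmul]
  rw [Finset.sum_congr rfl hinner] at hS0
  exact hS0

lemma cocircuit_nonempty (hC : Cocircuit M C) : C.Nonempty := by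
  rw [nonempty_iff_ne_empty]
  rintro rfl
  exact hC.2.1 M✶.empty_indep

lemma sum_cocircuit_mem_span
    (hrep : ∀ I, I ⊆ M.E → (M.Indep I ↔ LinearIndependent (ZMod 2) (fun x : I => φ x.1)))
    (hinj : InjOn φ M.E) (h3 : EveryElementInThreeTriangles M) (hEfin : M.E.Finite)
    (hC : Cocircuit M C) :
    ∑ e ∈ (hEfin.subset hC.1).toFinset, φ e ∈ span (ZMod 2) (φ '' (M.E \ C)) := by
  classical
  have hCE : C ⊆ M.E := hC.1
  have hCfin : C.Finite := hEfin.subset hCE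
  have hsplit : hEfin.toFinset = hCfin.toFinset ∪ (hEfin.sdiff (t := C)).toFinset := by
    ext a
    simp only [Set.Finite.mem_toFinset, Finset.mem_union, mem_diff]
    constructor
    · intro ha
      by_cases hc : a ∈ C
      · exact Or.inl hc
      · exact Or.inr ⟨ha, hc⟩
    · rintro (h | h)
      · exact hCE h
      · exact h.1
  have hdisj : Disjoint hCfin.toFinset (hEfin.sdiff (t := C)).toFinset := by
    rw [Finset.disjoint_left]
    intro a ha hb
    exact ((hEfin.sdiff (t := C)).mem_toFinset.1 hb).2 (hCfin.mem_toFinset.1 ha)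
  have hglob := ground_sum_zero hrep hinj h3 hEfin
  rw [hsplit, Finset.sum_union hdisj] at hglob
  have hmem2 : ∑ e ∈ (hEfin.sdiff (t := C)).toFinset, φ e ∈ span (ZMod 2) (φ '' (M.E \ C)) :=
    Submodule.sum_mem _ fun e he => subset_span ⟨e, (hEfin.sdiff (t := C)).mem_toFinset.1 he, rfl⟩
  have : ∑ e ∈ hCfin.toFinset, φ e = - ∑ e ∈ (hEfin.sdiff (t := C)).toFinset, φ e :=
    eq_neg_of_add_eq_zero_left hglob
  rw [this]
  exact Submodule.neg_mem _ hmem2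

lemma cocircuit_even
    (hrep : ∀ I, I ⊆ M.E → (M.Indep I ↔ LinearIndependent (ZMod 2) (fun x : I => φ x.1)))
    (hinj : InjOn φ M.E) (h3 : EveryElementInThreeTriangles M) (hEfin : M.E.Finite)
    (hC : Cocircuit M C) : Even C.ncard := by
  obtain ⟨x0, hx0⟩ := cocircuit_nonempty hC
  have hCfin : C.Finite := hEfin.subset hC.1
  have heven := even_of_sum_mem hrep hC hx0 hCfin.toFinset
    (fun e he => hCfin.mem_toFinset.1 he)
    (sum_cocircuit_mem_span hrep hinj h3 hEfin hC)
  rwa [Set.ncard_eq_toFinset_card _ hCfin]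

lemma tri_inter_cocircuit_even
    (hrep : ∀ I, I ⊆ M.E → (M.Indep I ↔ LinearIndependent (ZMod 2) (fun x : I => φ x.1)))
    (hinj : InjOn φ M.E) (hT : IsTriangle M T) (hC : Cocircuit M C) :
    Even ((T ∩ C).ncard) := by
  classical
  rcases (T ∩ C).eq_empty_or_nonempty with hempty | ⟨x0, hx0⟩
  · simp [hempty]
  have hTfin := tri_finite hT
  have hTC : (T ∩ C).Finite := hTfin.subset inter_subset_left
  have hTnC : (T \ C).Finite := hTfin.subset diff_subset
  have hsplit : hTfin.toFinset = hTC.toFinset ∪ hTnC.toFinset := by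
    ext a
    simp only [Set.Finite.mem_toFinset, Finset.mem_union, mem_inter_iff, mem_diff]
    constructor
    · intro ha
      by_cases hc : a ∈ C
      · exact Or.inl ⟨ha, hc⟩
      · exact Or.inr ⟨ha, hc⟩
    · rintro (h | h)
      · exact h.1
      · exact h.1
  have hdisj : Disjoint hTC.toFinset hTnC.toFinset := by
    rw [Finset.disjoint_left]
    intro a ha hb
    exact (hTnC.mem_toFinset.1 hb).2 (hTC.mem_toFinset.1 ha).2
  have hsum0 := tri_sum_zero hrep hinj hT
  rw [hsplit, Finset.sum_union hdisj] at hsum0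
  have hmem2 : ∑ e ∈ hTnC.toFinset, φ e ∈ span (ZMod 2) (φ '' (M.E \ C)) :=
    Submodule.sum_mem _ fun e he => subset_span
      ⟨e, ⟨hT.1.1 (hTnC.mem_toFinset.1 he).1, (hTnC.mem_toFinset.1 he).2⟩, rfl⟩
  have hsum : ∑ e ∈ hTC.toFinset, φ e ∈ span (ZMod 2) (φ '' (M.E \ C)) := by
    rw [eq_neg_of_add_eq_zero_left hsum0]
    exact Submodule.neg_mem _ hmem2
  have heven := even_of_sum_mem hrep hC hx0.2 hTC.toFinset
    (fun e he => (hTC.mem_toFinset.1 he).2) hsum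
  rwa [Set.ncard_eq_toFinset_card _ hTC]

lemma cocircuit_six
    (hrep : ∀ I, I ⊆ M.E → (M.Indep I ↔ LinearIndependent (ZMod 2) (fun x : I => φ x.1)))
    (hinj : InjOn φ M.E) (h3c : NConnected M 3) (hE14 : (14 : ℕ∞) ≤ M.E.encard)
    (h3 : EveryElementInThreeTriangles M) (hEfin : M.E.Finite)
    (hno4 : ¬ ∃ C, Cocircuit M C ∧ C.encard = 4)
    (hC : Cocircuit M C) : (6 : ℕ∞) ≤ C.encard := by
  obtain ⟨e, he⟩ := cocircuit_nonempty hC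
  have hCE : C ⊆ M.E := hC.1
  have heE : e ∈ M.E := hCE he
  obtain ⟨T1, T2, T3, h12, h13, h23, hset⟩ := Set.encard_eq_three.1 (h3 e heE)
  have hmem : ∀ T ∈ ({T1, T2, T3} : Set (Set α)), IsTriangle M T ∧ e ∈ T := by
    intro T hT
    rw [← hset] at hT
    exact hT
  have hpartner : ∀ T, IsTriangle M T → e ∈ T → ∃ p, p ∈ T ∧ p ∈ C ∧ p ≠ e := by
    intro T hT heT
    have heven := tri_inter_cocircuit_even hrep hinj hT hC
    have hTfin := tri_finite hT
    have hTC : (T ∩ C).Finite := hTfin.subset inter_subset_left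
    have hpos : 0 < (T ∩ C).ncard := by
      rw [Set.ncard_pos hTC]
      exact ⟨e, heT, he⟩
    have hle : (T ∩ C).ncard ≤ 3 := by
      have h1 := Set.ncard_le_ncard (inter_subset_left (s := T) (t := C)) hTfin
      have h2 : T.ncard = 3 := by
        rw [Set.ncard_def, hT.2]
        rfl
      omega
    have h2 : (T ∩ C).ncard = 2 := by
      obtain ⟨k, hk⟩ := heven
      omega
    obtain ⟨a, b, hab, hpair⟩ := Set.ncard_eq_two.1 h2
    have heab : e ∈ ({a, b} : Set α) := hpair ▸ (⟨heT, he⟩ : e ∈ T ∩ C)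
    rcases heab with rfl | rfl
    · have hbTC : b ∈ T ∩ C := hpair ▸ (by simp : b ∈ ({e, b} : Set α))
      exact ⟨b, hbTC.1, hbTC.2, fun h => hab h.symm⟩
    · have haTC : a ∈ T ∩ C := hpair ▸ (by simp : a ∈ ({a, e} : Set α))
      exact ⟨a, haTC.1, haTC.2, hab⟩
  obtain ⟨hT1, he1⟩ := hmem T1 (by simp)
  obtain ⟨hT2, he2⟩ := hmem T2 (by simp)
  obtain ⟨hT3, he3⟩ := hmem T3 (by simp)
  obtain ⟨p1, hp1T, hp1C, hp1e⟩ := hpartner T1 hT1 he1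
  obtain ⟨p2, hp2T, hp2C, hp2e⟩ := hpartner T2 hT2 he2
  obtain ⟨p3, hp3T, hp3C, hp3e⟩ := hpartner T3 hT3 he3
  have hpne : ∀ {Ta Tb : Set α} {pa pb : α}, IsTriangle M Ta → IsTriangle M Tb →
      e ∈ Ta → e ∈ Tb → pa ∈ Ta → pb ∈ Tb → pa ≠ e → Ta ≠ Tb → pa ≠ pb := by
    intro Ta Tb pa pb hTa hTb heTa heTb hpa hpb hpae hne
    rintro rfl
    exact hne (tri_unique hrep hinj hE14 h3c hTa hTb heTa hpa heTb hpb (Ne.symm hpae))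
  have hp12 : p1 ≠ p2 := hpne hT1 hT2 he1 he2 hp1T hp2T hp1e h12
  have hp13 : p1 ≠ p3 := hpne hT1 hT3 he1 he3 hp1T hp3T hp1e h13
  have hp23 : p2 ≠ p3 := hpne hT2 hT3 he2 he3 hp2T hp3T hp2e h23
  have hsub : ({e, p1, p2, p3} : Set α) ⊆ C := by
    intro a ha
    rcases ha with rfl | rfl | rfl | rfl
    · exact he
    · exact hp1C
    · exact hp2C
    · exact hp3C
  have hcard4 : ({e, p1, p2, p3} : Set α).encard = 4 := by
    rw [Set.encard_insert_of_notMem (by simp [Ne.symm hp1e, Ne.symm hp2e, Ne.symm hp3e]),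
      Set.encard_insert_of_notMem (by simp [hp12, hp13]),
      Set.encard_pair hp23]
    rfl
  have h4le : (4 : ℕ∞) ≤ C.encard := hcard4 ▸ Set.encard_mono hsub
  have hne4 : C.encard ≠ 4 := fun h => hno4 ⟨C, hC, h⟩
  have heven := cocircuit_even hrep hinj h3 hEfin hC
  have hCfin : C.Finite := hEfin.subset hCE
  rw [hCfin.encard_eq_coe_toFinset_card] at h4le hne4 ⊢
  rw [Set.ncard_eq_toFinset_card _ hCfin] at heven
  have h4le' : 4 ≤ hCfin.toFinset.card := by exact_mod_cast h4le
  have hne4' : hCfin.toFinset.card ≠ 4 := fun h => hne4 (by exact_mod_cast h)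
  obtain ⟨k, hk⟩ := heven
  have : 6 ≤ hCfin.toFinset.card := by omega
  exact_mod_cast this

end CocircuitSize

section Descent
variable {M : Matroid α} {φ : α → (α →₀ ZMod 2)} {Y : Set α}

lemma descent
    (hrep : ∀ I, I ⊆ M.E → (M.Indep I ↔ LinearIndependent (ZMod 2) (fun x : I => φ x.1)))
    (hinj : InjOn φ M.E) (hI4 : InternallyFourConnected M)
    (hE14 : (14 : ℕ∞) ≤ M.E.encard) (h3 : EveryElementInThreeTriangles M)
    (hno4 : ¬ ∃ C, Cocircuit M C ∧ C.encard = 4) (hEfin : M.E.Finite)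
    (hfin : eRk M ≠ ⊤) (hYE : Y ⊆ M.E) (hY4 : (4 : ℕ∞) ≤ Y.encard)
    (hfclY : fcl M Y = M.E) :
    ∀ n : ℕ, 1 ≤ n → ∀ Z, Z ⊆ M.E → M.closure Z = Z → Y ⊆ Z →
      eRank M Z + eRank M (M.E \ Z) ≤ eRk M + 3 →
      eRank M Z + (n : ℕ∞) = eRk M → False := by
  intro n
  induction n using Nat.strong_induction_on with
  | _ n ihn =>
  intro hn1 Z hZE hFc hYZ hlamZ heq
  set W := M.E \ Z with hW
  have hfinZ : eRank M Z ≠ ⊤ := fun h => hfin (top_le_iff.1 (h ▸ eRank_le_eRk))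
  have hfinW : eRank M W ≠ ⊤ := fun h => hfin (top_le_iff.1 (h ▸ eRank_le_eRk))
  have hZne : Z ≠ M.E := by
    rintro rfl
    have h0 : eRk M + (n : ℕ∞) = eRk M + 0 := by
      rw [add_zero]; exact heq
    have := WithTop.add_left_cancel hfin h0
    have hn0 : n = 0 := (Nat.cast_eq_zero (R := ℕ∞)).1 this
    omega
  -- W contains a cocircuit, hence has at least 6 elements
  have hWdep : ¬ M✶.Indep W := by
    intro hind
    obtain ⟨-, B, hB, hdisj⟩ := dual_indep_iff_exists'.1 hind
    have hBZ : B ⊆ Z := by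
      intro a haB
      by_contra haZ
      exact (disjoint_right.1 hdisj haB) ⟨hB.subset_ground haB, haZ⟩
    have : M.E ⊆ Z := by
      calc M.E = M.closure B := hB.closure_eq.symm
        _ ⊆ M.closure Z := M.closure_subset_closure hBZ
        _ = Z := hFc
    exact hZne (subset_antisymm hZE this)
  obtain ⟨C0, hC0W, hC0⟩ := exists_circuit_subset M✶ (by rwa [dual_ground]) hWdep
    (by rw [dual_ground]; exact diff_subset)
  have hW6 : (6 : ℕ∞) ≤ W.encard :=
    le_trans (cocircuit_six hrep hinj hI4.1 hE14 h3 hEfin hno4 hC0) (Set.encard_mono hC0W)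
  -- Z is not fully closed, giving x in the dual closure
  have hnotfc : M✶.closure Z ≠ Z := by
    intro hfc
    have hmem : Z ∈ {F | Y ⊆ F ∧ FullyClosed M F} := ⟨hYZ, hFc, hfc⟩
    have : fcl M Y ⊆ Z := sInter_subset_of_mem hmem
    rw [hfclY] at this
    exact hZne (subset_antisymm hZE this)
  have hZsubcl : Z ⊆ M✶.closure Z := M✶.subset_closure Z (by rwa [dual_ground])
  obtain ⟨x, hx1, hx2⟩ := exists_of_ssubset (ssubset_of_subset_of_ne hZsubcl (Ne.symm hnotfc))
  have hxE : x ∈ M.E := by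
    have := M✶.closure_subset_ground Z hx1
    rwa [dual_ground] at this
  have hxW : x ∈ W := ⟨hxE, hx2⟩
  obtain ⟨C, hCcoc, hxC, hCsub⟩ := cocircuit_of_dual_closure hEfin hZE hx1 hx2
  have hWxsub : W \ {x} ⊆ M.E \ C := by
    rintro a ⟨⟨haE, haZ⟩, hax⟩
    refine ⟨haE, fun haC => ?_⟩
    rcases Set.mem_insert_iff.1 (hCsub haC) with rfl | h
    · exact hax rfl
    · exact haZ h
  have hxnotcl : x ∉ M.closure (W \ {x}) := fun h =>
    cocircuit_not_mem_closure_compl hCcoc hxC (M.closure_subset_closure hWxsub h)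
  have hrankW : eRank M W = eRank M (W \ {x}) + 1 := by
    have h1 := eRank_insert_not_mem_closure (X := W \ {x})
      ((diff_subset.trans diff_subset)) hxE hxnotcl
    rwa [Set.insert_diff_singleton, Set.insert_eq_self.2 hxW] at h1
  have hxclZ : x ∉ M.closure Z := by rwa [hFc]
  have hxZsub : insert x Z ⊆ M.E := insert_subset hxE hZE
  have hrankZx : eRank M (insert x Z) = eRank M Z + 1 :=
    eRank_insert_not_mem_closure hZE hxE hxclZ
  rcases Nat.lt_or_ge n 2 with hn2 | hn2
  -- main case : n = 1, derive the contradiction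
  · have hn : n = 1 := by omega
    subst hn
    -- λ(Z) = 3 exactly
    obtain ⟨r, hr⟩ : ∃ r : ℕ, eRk M = (r : ℕ∞) := by
      lift eRk M to ℕ using hfin with r
      exact ⟨r, rfl⟩
    obtain ⟨a, ha⟩ : ∃ a : ℕ, eRank M Z = (a : ℕ∞) := by
      lift eRank M Z to ℕ using hfinZ with a
      exact ⟨a, rfl⟩
    obtain ⟨b, hb⟩ : ∃ b : ℕ, eRank M W = (b : ℕ∞) := by
      lift eRank M W to ℕ using hfinW with b
      exact ⟨b, rfl⟩
    have har : a + 1 = r := by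
      rw [ha, hr] at heq
      exact_mod_cast heq
    have hab_le : a + b ≤ r + 3 := by
      rw [ha, hb, hr] at hlamZ
      exact_mod_cast hlamZ
    have hab_eq : a + b = r + 3 := by
      by_contra hne3
      have hrank2 : eRank M Z + eRank M W ≤ eRk M + ((3 - 1 : ℕ) : ℕ∞) := by
        rw [ha, hb, hr]
        have : a + b ≤ r + 2 := by omega
        exact_mod_cast this
      have hsep : IsKSeparation M 3 Z W :=
        ⟨disjoint_sdiff_right, union_diff_cancel hZE, hrank2,
          le_trans (by norm_num) (le_trans hY4 (Set.encard_mono hYZ)),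
          le_trans (by norm_num) hW6⟩
      have h4Z : (4 : ℕ∞) ≤ Z.encard := le_trans hY4 (Set.encard_mono hYZ)
      rcases hI4.2 Z W hsep with h | h | h | h
      · rw [h.2] at h4Z; norm_num at h4Z
      · rw [h.2] at h4Z; norm_num at h4Z
      · rw [h.2] at hW6; norm_num at hW6
      · rw [h.2] at hW6; norm_num at hW6
    have hb4 : b = 4 := by omega
    -- rank of W \ {x} is 3
    obtain ⟨w, hw⟩ : ∃ w : ℕ, eRank M (W \ {x}) = (w : ℕ∞) := by
      have : eRank M (W \ {x}) ≠ ⊤ := fun h => hfin (top_le_iff.1 (h ▸ eRank_le_eRk))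
      lift eRank M (W \ {x}) to ℕ using this with w
      exact ⟨w, rfl⟩
    have hw3 : eRank M (W \ {x}) = (3 : ℕ∞) := by
      rw [hb, hw] at hrankW
      have : b = w + 1 := by exact_mod_cast hrankW
      rw [hw]
      have : w = 3 := by omega
      exact_mod_cast congrArg (Nat.cast : ℕ → ℕ∞) this
    -- closure of insert x Z is everything
    have hclE : M.closure (insert x Z) = M.E := by
      refine flat_eq_ground hfin (M.closure_subset_ground _) (M.closure_closure _) ?_
      rw [eRank_closure hxZsub, hrankZx, ha, hr]
      exact_mod_cast har
    -- basis of W \ {x}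
    obtain ⟨B3, hB3⟩ := M.exists_isBasis (W \ {x}) (diff_subset.trans diff_subset)
    have hB3card : B3.encard = 3 := by
      have := Basis'_eRank hB3.isBasis'
      rw [hw3] at this
      exact this.symm
    set V : Submodule (ZMod 2) (α →₀ ZMod 2) := span (ZMod 2) (φ '' B3) with hV
    set SZ : Submodule (ZMod 2) (α →₀ ZMod 2) := span (ZMod 2) (φ '' Z) with hSZ
    have hVsub : ∀ w' ∈ W \ {x}, φ w' ∈ V :=
      fun w' hw' => mem_span_of_mem_closure hrep
        (hB3.indep.subset_ground) (hB3.subset_closure hw')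
    -- encard of V is at most 8
    have hVcard : ((V : Set (α →₀ ZMod 2))).encard ≤ 8 := by
      obtain ⟨v1, v2, v3, h12, h13, h23, hBeq⟩ := Set.encard_eq_three.1 hB3card
      have himg : φ '' B3 = insert (φ v1) (insert (φ v2) (insert (φ v3) ∅)) := by
        rw [hBeq]
        simp [Set.image_insert_eq]
      rw [hV, himg]
      have h0 : ((span (ZMod 2) (∅ : Set (α →₀ ZMod 2)) : Submodule (ZMod 2) _) :
          Set (α →₀ ZMod 2)).encard = 1 := by
        rw [span_empty]
        simp [Set.encard_singleton]
      calc ((span (ZMod 2) (insert (φ v1) (insert (φ v2) (insert (φ v3) ∅))) :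
            Submodule (ZMod 2) _) : Set (α →₀ ZMod 2)).encard
          ≤ 2 * ((span (ZMod 2) (insert (φ v2) (insert (φ v3) ∅)) :
            Submodule (ZMod 2) _) : Set (α →₀ ZMod 2)).encard := span_encard_le _ _
        _ ≤ 2 * (2 * ((span (ZMod 2) (insert (φ v3) ∅) :
            Submodule (ZMod 2) _) : Set (α →₀ ZMod 2)).encard) := by
            exact mul_le_mul_right (span_encard_le _ _) 2
        _ ≤ 2 * (2 * (2 * ((span (ZMod 2) (∅ : Set (α →₀ ZMod 2)) :
            Submodule (ZMod 2) _) : Set (α →₀ ZMod 2)).encard)) := by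
            exact mul_le_mul_right (mul_le_mul_right (span_encard_le _ _) 2) 2
        _ = 8 := by rw [h0]; norm_num
    have hnotinSZ : ∀ w' ∈ W, φ w' ∉ SZ := by
      intro w' hw' hmem
      have : w' ∈ M.closure Z := mem_closure_of_mem_span hrep hZE hw'.1 hmem
      rw [hFc] at this
      exact hw'.2 this
    have hgmemSZ : ∀ w' ∈ W \ {x}, φ w' - φ x ∈ SZ := by
      intro w' hw'
      have hw'E : w' ∈ M.E := hw'.1.1
      have hmemcl : w' ∈ M.closure (insert x Z) := hclE.symm ▸ hw'E
      have hspan := mem_span_of_mem_closure hrep hxZsub hmemcl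
      rw [Set.image_insert_eq] at hspan
      obtain ⟨c, z, hz, heqw⟩ := Submodule.mem_span_insert.1 hspan
      rcases zmod2_cases c with rfl | rfl
      · rw [zero_smul, zero_add] at heqw
        exact absurd (heqw ▸ hz) (hnotinSZ w' hw'.1)
      · rw [one_smul] at heqw
        rw [heqw]
        simpa using hz
    -- the injection counting
    have h5 : (5 : ℕ∞) ≤ (W \ {x}).encard := by
      have hplus := Set.encard_diff_singleton_add_one hxW
      rw [← hplus] at hW6
      have h6 : ((5 : ℕ∞) + 1) ≤ (W \ {x}).encard + 1 := by
        exact_mod_cast hW6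
      exact (WithTop.add_le_add_iff_right WithTop.one_ne_top).1 h6
    set J : Set (α →₀ ZMod 2) := {v | v ∈ SZ ∧ v + φ x ∈ V} with hJ
    have hWJ : (W \ {x}).encard ≤ J.encard := by
      have hinjg : InjOn (fun w' => φ w' - φ x) (W \ {x}) := by
        intro a ha b hb hab
        simp only [sub_left_inj] at hab
        exact hinj ha.1.1 hb.1.1 hab
      have himgJ : (fun w' => φ w' - φ x) '' (W \ {x}) ⊆ J := by
        rintro - ⟨w', hw', rfl⟩
        refine ⟨hgmemSZ w' hw', ?_⟩
        rw [sub_add_cancel]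
        exact hVsub w' hw'
      rw [← hinjg.encard_image]
      exact Set.encard_mono himgJ
    set K : Set (α →₀ ZMod 2) := {v | v ∈ V ∧ v ∈ SZ} with hK
    have hJK : J.encard ≤ K.encard := by
      rcases J.eq_empty_or_nonempty with hJe | ⟨v0, hv0⟩
      · simp [hJe]
      have hinjsub : InjOn (fun v => v - v0) J := by
        intro a _ b _ hab
        simpa [sub_left_inj] using hab
      have himgK : (fun v => v - v0) '' J ⊆ K := by
        rintro - ⟨v, hv, rfl⟩
        show v - v0 ∈ V ∧ v - v0 ∈ SZ
        constructor
        · have heqv : v - v0 = (v + φ x) - (v0 + φ x) := by abel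
          rw [heqv]
          exact Submodule.sub_mem _ hv.2 hv0.2
        · exact Submodule.sub_mem _ hv.1 hv0.1
      rw [← hinjsub.encard_image]
      exact Set.encard_mono himgK
    obtain ⟨w0, hw0⟩ : (W \ {x}).Nonempty := by
      rw [← Set.encard_pos]
      exact lt_of_lt_of_le (by norm_num) h5
    have hKbound : 2 * K.encard ≤ ((V : Set (α →₀ ZMod 2))).encard := by
      set u := φ w0 with hu
      have huV : u ∈ V := hVsub w0 hw0
      have huSZ : u ∉ SZ := hnotinSZ w0 hw0.1
      have hinjadd : InjOn (fun v => v + u) K := by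
        intro a _ b _ hab
        simpa using hab
      have himgVK : (fun v => v + u) '' K ⊆ (V : Set (α →₀ ZMod 2)) \ K := by
        rintro - ⟨v, hv, rfl⟩
        refine ⟨Submodule.add_mem _ hv.1 huV, fun hvK => ?_⟩
        have : u = (v + u) - v := by abel
        exact huSZ (this ▸ Submodule.sub_mem _ hvK.2 hv.2)
      have h1 : K.encard ≤ ((V : Set (α →₀ ZMod 2)) \ K).encard := by
        rw [← hinjadd.encard_image]
        exact Set.encard_mono himgVK
      have h2 : K.encard + ((V : Set (α →₀ ZMod 2)) \ K).encard
          = (K ∪ ((V : Set (α →₀ ZMod 2)) \ K)).encard :=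
        (Set.encard_union_eq disjoint_sdiff_right).symm
      have h3' : (K ∪ ((V : Set (α →₀ ZMod 2)) \ K)).encard
          ≤ ((V : Set (α →₀ ZMod 2))).encard := by
        refine Set.encard_mono (union_subset (fun v hv => hv.1) diff_subset)
      calc 2 * K.encard = K.encard + K.encard := two_mul _
        _ ≤ K.encard + ((V : Set (α →₀ ZMod 2)) \ K).encard := add_le_add_right h1 _
        _ = (K ∪ ((V : Set (α →₀ ZMod 2)) \ K)).encard := h2
        _ ≤ ((V : Set (α →₀ ZMod 2))).encard := h3'
    -- combine: 5 ≤ encard K and 2 * encard K ≤ 8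
    have hK5 : (5 : ℕ∞) ≤ K.encard := le_trans h5 (le_trans hWJ hJK)
    have hK8 : 2 * K.encard ≤ 8 := le_trans hKbound hVcard
    have hKne : K.encard ≠ ⊤ := by
      intro h
      rw [h] at hK8
      norm_num at hK8
    lift K.encard to ℕ using hKne with k
    have hk5 : 5 ≤ k := by exact_mod_cast hK5
    have hk8 : 2 * k ≤ 8 := by exact_mod_cast hK8
    omega
  -- descent case : n ≥ 2
  · set Z' := M.closure (insert x Z) with hZ'
    have hZ'E : Z' ⊆ M.E := M.closure_subset_ground _
    have hZ'c : M.closure Z' = Z' := M.closure_closure _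
    have hYZ' : Y ⊆ Z' :=
      hYZ.trans ((subset_insert x Z).trans (M.subset_closure _ hxZsub))
    have hrankZ' : eRank M Z' = eRank M Z + 1 := by
      rw [hZ', eRank_closure hxZsub, hrankZx]
    have hsubWx : M.E \ Z' ⊆ W \ {x} := by
      rintro a ⟨haE, haZ'⟩
      have hins : insert x Z ⊆ Z' := M.subset_closure _ hxZsub
      constructor
      · exact ⟨haE, fun haZ => haZ' (hins (Or.inr haZ))⟩
      · exact fun hax => haZ' (hins (Or.inl (by exact_mod_cast hax)))
    have hlamZ' : eRank M Z' + eRank M (M.E \ Z') ≤ eRk M + 3 := by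
      calc eRank M Z' + eRank M (M.E \ Z')
          ≤ (eRank M Z + 1) + eRank M (W \ {x}) :=
            add_le_add hrankZ'.le (eRank_mono hsubWx)
        _ = eRank M Z + (eRank M (W \ {x}) + 1) := by
            rw [add_assoc, add_comm 1]
        _ = eRank M Z + eRank M W := by rw [← hrankW]
        _ ≤ eRk M + 3 := hlamZ
    have heq' : eRank M Z' + ((n - 1 : ℕ) : ℕ∞) = eRk M := by
      rw [hrankZ']
      have hcast : (1 : ℕ∞) + ((n - 1 : ℕ) : ℕ∞) = (n : ℕ∞) := by
        have : 1 + (n - 1) = n := by omega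
        exact_mod_cast this
      rw [add_assoc, hcast]
      exact heq
    exact ihn (n - 1) (by omega) (by omega) Z' hZ'E hZ'c hYZ' hlamZ' heq'

end Descent

theorem stmt7 (M : Matroid α) (hI4 : InternallyFourConnected M) (hB : Binary M)
    (h3 : EveryElementInThreeTriangles M) (hE : (14 : ℕ∞) ≤ M.E.encard)
    (hno4 : ¬ ∃ C, Cocircuit M C ∧ C.encard = 4)
    (X Y : Set α) (hsep : IsExact4Separation M X Y) (hXfcl : X ⊆ fcl M Y) :
    M✶.Indep X ∧ eRank M X = 3 ∧ X ⊆ M.closure Y := by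
  obtain ⟨hdisj, hunion, heq3, hX4, hY4⟩ := hsep
  have hXE : X ⊆ M.E := hunion ▸ subset_union_left
  have hYE : Y ⊆ M.E := hunion ▸ subset_union_right
  -- finiteness of the rank
  have hfin : eRk M ≠ ⊤ := by
    intro htop
    refine hI4.1 2 (by norm_num) (by norm_num) X Y ⟨hdisj, hunion, ?_, ?_, ?_⟩
    · rw [htop]; exact le_top
    · exact le_trans (by norm_num) hX4
    · exact le_trans (by norm_num) hY4
  obtain ⟨φ, hrep⟩ := hB
  have hinj : InjOn φ M.E := phi_injOn hrep hI4.1 hE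
  have hEfin : M.E.Finite := ground_finite hrep hI4.1 hE hfin
  have hXeq : M.E \ Y = X := by
    apply subset_antisymm
    · rintro a ⟨haE, haY⟩
      rcases (hunion ▸ haE : a ∈ X ∪ Y) with h | h
      · exact h
      · exact absurd h haY
    · intro a ha
      exact ⟨hXE ha, fun haY => (disjoint_left.1 hdisj ha) haY⟩
  -- fcl M Y = M.E
  have hfclY : fcl M Y = M.E := by
    apply subset_antisymm
    · refine sInter_subset_of_mem ⟨hYE, M.closure_ground, ?_⟩
      have := M✶.closure_ground
      rwa [dual_ground] at this
    · rw [← hunion]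
      refine union_subset hXfcl (subset_sInter fun F hF => hF.1)
  -- main claim: Y spans
  have hclY : M.closure Y = M.E := by
    set Z0 := M.closure Y with hZ0
    have hZ0E : Z0 ⊆ M.E := M.closure_subset_ground _
    have hZ0c : M.closure Z0 = Z0 := M.closure_closure _
    have hYZ0 : Y ⊆ Z0 := M.subset_closure Y hYE
    have hrank0 : eRank M Z0 = eRank M Y := eRank_closure hYE
    have hlam0 : eRank M Z0 + eRank M (M.E \ Z0) ≤ eRk M + 3 := by
      calc eRank M Z0 + eRank M (M.E \ Z0)
          ≤ eRank M Y + eRank M (M.E \ Y) := by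
            exact add_le_add hrank0.le (eRank_mono (diff_subset_diff_right hYZ0))
        _ = eRank M Y + eRank M X := by rw [hXeq]
        _ = eRk M + 3 := by rw [add_comm (eRank M Y)]; exact heq3
    have hfin0 : eRank M Z0 ≠ ⊤ := fun h => hfin (top_le_iff.1 (h ▸ eRank_le_eRk))
    obtain ⟨a, ha⟩ : ∃ a : ℕ, eRank M Z0 = (a : ℕ∞) := by
      lift eRank M Z0 to ℕ using hfin0 with a
      exact ⟨a, rfl⟩
    obtain ⟨r, hr⟩ : ∃ r : ℕ, eRk M = (r : ℕ∞) := by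
      lift eRk M to ℕ using hfin with r
      exact ⟨r, rfl⟩
    have har : a ≤ r := by
      have := eRank_le_eRk (M := M) (X := Z0)
      rw [ha, hr] at this
      exact_mod_cast this
    rcases eq_or_lt_of_le har with heqar | hlt
    · exact flat_eq_ground hfin hZ0E hZ0c (by rw [ha, hr, heqar])
    · exfalso
      refine descent hrep hinj hI4 hE h3 hno4 hEfin hfin hYE hY4 hfclY
        (r - a) (by omega) Z0 hZ0E hZ0c hYZ0 hlam0 ?_
      rw [ha, hr]
      have : a + (r - a) = r := by omega
      exact_mod_cast this
  -- conclusions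
  have hXcl : X ⊆ M.closure Y := hclY ▸ hXE
  have hYrank : eRank M Y = eRk M := by
    have := eRank_closure hYE
    rw [hclY] at this
    exact this.symm
  refine ⟨?_, ?_, hXcl⟩
  · obtain ⟨I, hI⟩ := M.exists_isBasis Y
    have hIbase : M.IsBase I := by
      refine hI.indep.isBase_of_ground_subset_closure ?_
      rw [hI.closure_eq_closure, hclY]
    exact dual_indep_iff_exists'.2 ⟨hXE, I, hIbase, hdisj.mono_right hI.subset⟩
  · have hXfin : eRank M X ≠ ⊤ := fun h => hfin (top_le_iff.1 (h ▸ eRank_le_eRk))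
    rw [hYrank] at heq3
    have h3' : eRank M X + eRk M = 3 + eRk M := by
      rw [heq3, add_comm]
    exact WithTop.add_right_cancel hfin h3'

end Lemmas

end Paper
end
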